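/- Let T be a bounded linear operator on H admitting an A-adjoint T♯. Then w_A(T) = √( (1/4)‖T♯∘T + T∘T♯‖_A ) if and only if for every θ ∈ ℝ one has ‖(e^{iθ}T + e^{−iθ}T♯)/2‖_A² = ‖(e^{iθ}T − e^{−iθ}T♯)/(2i)‖_A² = (1/4)‖T♯∘T + T∘T♯‖_A. -/

import Mathlib

noncomputable section

open Complex ContinuousLinearMap

variable {H : Type*} [NormedAddCommGroup H] [InnerProductSpace ℂ H] [CompleteSpace H]

/-- The `A`-inner product `⟨x, y⟩_A = ⟨A x, y⟩`. -/
def innA (A : H →L[ℂ] H) (x y : H) : ℂ := @inner ℂ _ _ (A x) y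

/-- The `A`-seminorm `‖x‖_A = √⟨A x, x⟩`. -/
def vnormA (A : H →L[ℂ] H) (x : H) : ℝ := Real.sqrt (innA A x x).re

/-- The `A`-operator seminorm `‖T‖_A = sup {‖T x‖_A : ‖x‖_A = 1}`. -/
def opnormA (A T : H →L[ℂ] H) : ℝ :=
  sSup {r : ℝ | ∃ x : H, vnormA A x = 1 ∧ r = vnormA A (T x)}

/-- The `A`-numerical radius `w_A(T) = sup {|⟨T x, x⟩_A| : ‖x‖_A = 1}`. -/
def wA (A T : H →L[ℂ] H) : ℝ :=
  sSup {r : ℝ | ∃ x : H, vnormA A x = 1 ∧ r = ‖innA A (T x) x‖}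

/-- The `A`-numerical range `W_A(T) = {⟨T x, x⟩_A : ‖x‖_A = 1}`. -/
def WA (A T : H →L[ℂ] H) : Set ℂ :=
  {z : ℂ | ∃ x : H, vnormA A x = 1 ∧ z = innA A (T x) x}

/-- `Re_A(T) = (T + T♯)/2`, given an `A`-adjoint `Ts` of `T`. -/
def ReA (T Ts : H →L[ℂ] H) : H →L[ℂ] H := (2 : ℂ)⁻¹ • (T + Ts)

/-- `Im_A(T) = (T - T♯)/(2i)`, given an `A`-adjoint `Ts` of `T`. -/
def ImA (T Ts : H →L[ℂ] H) : H →L[ℂ] H := (2 * Complex.I)⁻¹ • (T - Ts)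

/-- `Ts` is an `A`-adjoint of `T`, i.e. `A ∘ Ts = T* ∘ A`. -/
def IsAAdjoint (A T Ts : H →L[ℂ] H) : Prop :=
  A.comp Ts = (ContinuousLinearMap.adjoint T).comp A


section AuxLemmas

set_option linter.unusedSectionVars false

local notation "⟪" x ", " y "⟫" => @inner ℂ _ _ x y

set_option linter.unusedSectionVars false
variable {A : H →L[ℂ] H}

lemma innA_conj (hA : A.IsPositive) (x y : H) :
    innA A y x = starRingEnd ℂ (innA A x y) := by
  unfold innA
  rw [← inner_conj_symm, ← hA.1.clm_adjoint_eq, adjoint_inner_left, hA.1.clm_adjoint_eq]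

lemma innA_self_re_nonneg (hA : A.IsPositive) (x : H) : 0 ≤ (innA A x x).re := hA.2 x

lemma innA_self_im (hA : A.IsPositive) (x : H) : (innA A x x).im = 0 := by
  have h := innA_conj hA x x
  have := congrArg Complex.im h
  simp at this
  linarith

lemma vnormA_nonneg (A : H →L[ℂ] H) (x : H) : 0 ≤ vnormA A x := Real.sqrt_nonneg _

lemma vnormA_sq (hA : A.IsPositive) (x : H) : vnormA A x ^ 2 = (innA A x x).re :=
  Real.sq_sqrt (innA_self_re_nonneg hA x)

lemma innA_add_left (A : H →L[ℂ] H) (x y z : H) :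
    innA A (x + y) z = innA A x z + innA A y z := by
  unfold innA; rw [map_add, inner_add_left]

lemma innA_add_right (A : H →L[ℂ] H) (x y z : H) :
    innA A x (y + z) = innA A x y + innA A x z := inner_add_right _ _ _

lemma innA_smul_left (A : H →L[ℂ] H) (c : ℂ) (x y : H) :
    innA A (c • x) y = starRingEnd ℂ c * innA A x y := by
  unfold innA; rw [map_smul, inner_smul_left]

lemma innA_smul_right (A : H →L[ℂ] H) (c : ℂ) (x y : H) :
    innA A x (c • y) = c * innA A x y := inner_smul_right _ _ _

lemma innA_sub_left (A : H →L[ℂ] H) (x y z : H) :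
    innA A (x - y) z = innA A x z - innA A y z := by
  unfold innA; rw [map_sub, inner_sub_left]

lemma innA_sub_right (A : H →L[ℂ] H) (x y z : H) :
    innA A x (y - z) = innA A x y - innA A x z := inner_sub_right _ _ _

lemma innA_self_eq_sq (hA : A.IsPositive) (x : H) :
    innA A x x = (vnormA A x ^ 2 : ℝ) := by
  apply Complex.ext
  · simp [vnormA_sq hA]
  · simp [innA_self_im hA, pow_two, Complex.mul_im]

lemma discrim_nonneg_le {a b c : ℝ} (ha : 0 < a) (h : ∀ t : ℝ, 0 ≤ a * t ^ 2 + b * t + c) :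
    b ^ 2 ≤ 4 * a * c := by
  have h0 := h (-b / (2 * a))
  have ht : 2 * a * (-b / (2 * a)) = -b := by field_simp
  nlinarith [h0, ht, sq_nonneg (-b / (2 * a))]

lemma linear_nonneg_eq {b c : ℝ} (hb : 0 ≤ b) (h : ∀ t : ℝ, 0 ≤ b * t + c) : b = 0 := by
  rcases eq_or_lt_of_le hb with h0 | h0
  · exact h0.symm
  · exfalso
    have h1 := h (-(c + 1) / b)
    have ht : b * (-(c + 1) / b) = -(c + 1) := by field_simp
    rw [ht] at h1
    linarith

lemma innA_cauchy (hA : A.IsPositive) (x y : H) :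
    ‖innA A x y‖ ≤ vnormA A x * vnormA A y := by
  set z := innA A x y with hz
  by_cases h0 : z = 0
  · rw [h0]
    simpa using mul_nonneg (vnormA_nonneg A x) (vnormA_nonneg A y)
  · have habs : (0:ℝ) < ‖z‖ := by
      simpa [norm_pos_iff] using h0
    set u : ℂ := (starRingEnd ℂ z) / (‖z‖ : ℂ) with hu_def
    have hu : u * z = (‖z‖ : ℂ) := by
      rw [hu_def, div_mul_eq_mul_div, mul_comm, Complex.mul_conj, Complex.normSq_eq_norm_sq]
      push_cast
      rw [sq, mul_div_assoc, div_self (Complex.ofReal_ne_zero.mpr habs.ne'), mul_one]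
    have h2 : (starRingEnd ℂ u) * (starRingEnd ℂ z) = (‖z‖ : ℂ) := by
      rw [← map_mul, hu, Complex.conj_ofReal]
    have hcu : (starRingEnd ℂ u) * u = 1 := by
      have habsu : ‖u‖ = 1 := by
        rw [hu_def, norm_div, Complex.norm_conj, Complex.norm_real, Real.norm_eq_abs,
          _root_.abs_of_nonneg (le_of_lt habs), div_self habs.ne']
      rw [mul_comm, Complex.mul_conj, Complex.normSq_eq_norm_sq, habsu]
      norm_num
    have key : ∀ t : ℝ, 0 ≤ vnormA A x ^ 2 * t ^ 2 + 2 * ‖z‖ * t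
        + vnormA A y ^ 2 := by
      intro t
      have hnn := innA_self_re_nonneg hA ((t : ℂ) • x + u • y)
      have hexp : innA A ((t : ℂ) • x + u • y) ((t : ℂ) • x + u • y)
          = ((vnormA A x ^ 2 * t ^ 2 + 2 * ‖z‖ * t + vnormA A y ^ 2 : ℝ) : ℂ) := by
        rw [innA_add_left, innA_add_right, innA_add_right, innA_smul_left, innA_smul_right,
          innA_smul_right, innA_smul_left, innA_smul_left, innA_smul_right, innA_smul_left,
          innA_smul_right, innA_self_eq_sq hA x, innA_self_eq_sq hA y,
          innA_conj hA x y, ← hz]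
        rw [Complex.conj_ofReal]
        push_cast
        linear_combination (t : ℂ) * hu + (t : ℂ) * h2 + ((vnormA A y : ℂ)) ^ 2 * hcu
      rw [hexp] at hnn
      rwa [Complex.ofReal_re] at hnn
    rcases eq_or_lt_of_le (vnormA_nonneg A x) with hx0 | hx0
    · have hb : 2 * ‖z‖ = 0 := by
        apply linear_nonneg_eq (c := vnormA A y ^ 2) (by positivity)
        intro t
        have := key t
        rw [← hx0] at this
        nlinarith [this]
      have : ‖z‖ = 0 := by linarith
      rw [this]
      exact mul_nonneg (vnormA_nonneg A x) (vnormA_nonneg A y)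
    · have hd := discrim_nonneg_le (by positivity : (0:ℝ) < vnormA A x ^ 2) key
      nlinarith [vnormA_nonneg A y, norm_nonneg z,
        mul_nonneg (le_of_lt hx0) (vnormA_nonneg A y)]

lemma vnormA_sq_add (hA : A.IsPositive) (x y : H) :
    vnormA A (x + y) ^ 2 = vnormA A x ^ 2 + 2 * (innA A x y).re + vnormA A y ^ 2 := by
  have hexp : innA A (x + y) (x + y) = innA A x x + innA A y y
      + (innA A x y + starRingEnd ℂ (innA A x y)) := by
    rw [innA_add_left, innA_add_right, innA_add_right, ← innA_conj hA x y]
    ring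
  have h := congrArg Complex.re hexp
  rw [vnormA_sq hA]
  simp only [Complex.add_re, Complex.conj_re] at h
  rw [h, ← vnormA_sq hA x, ← vnormA_sq hA y]
  ring

lemma vnormA_add_le (hA : A.IsPositive) (x y : H) :
    vnormA A (x + y) ≤ vnormA A x + vnormA A y := by
  have h1 := vnormA_sq_add hA x y
  have h2 : (innA A x y).re ≤ ‖innA A x y‖ := Complex.re_le_norm _
  have h3 := innA_cauchy hA x y
  nlinarith [vnormA_nonneg A (x + y), vnormA_nonneg A x, vnormA_nonneg A y]

lemma vnormA_smul (hA : A.IsPositive) (c : ℂ) (x : H) :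
    vnormA A (c • x) = ‖c‖ * vnormA A x := by
  unfold vnormA
  rw [innA_smul_left, innA_smul_right, ← mul_assoc, mul_comm (starRingEnd ℂ c) c,
    Complex.mul_conj, Complex.normSq_eq_norm_sq]
  rw [Complex.re_ofReal_mul]
  rw [Real.sqrt_mul (by positivity)]
  rw [Real.sqrt_sq (norm_nonneg c)]

lemma vnormA_parallelogram (hA : A.IsPositive) (x y : H) :
    vnormA A (x + y) ^ 2 + vnormA A (x - y) ^ 2 = 2 * vnormA A x ^ 2 + 2 * vnormA A y ^ 2 := by
  have hexp : innA A (x + y) (x + y) + innA A (x - y) (x - y)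
      = 2 * innA A x x + 2 * innA A y y := by
    rw [innA_add_left, innA_add_right, innA_add_right, innA_sub_left, innA_sub_right,
      innA_sub_right]
    ring
  have h := congrArg Complex.re hexp
  simp only [Complex.add_re, Complex.mul_re, Complex.re_ofNat, Complex.im_ofNat] at h
  rw [vnormA_sq hA, vnormA_sq hA, vnormA_sq hA, vnormA_sq hA]
  simp at h
  linarith

/-- `(V, W)` is an adjoint pair for `A`. -/
def PairA (A V W : H →L[ℂ] H) : Prop :=
  A.comp W = (ContinuousLinearMap.adjoint V).comp A ∧
  A.comp V = (ContinuousLinearMap.adjoint W).comp A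

lemma PairA.symm {A V W : H →L[ℂ] H} (h : PairA A V W) : PairA A W V := ⟨h.2, h.1⟩

lemma PairA.add {A V W V' W' : H →L[ℂ] H} (h : PairA A V W) (h' : PairA A V' W') :
    PairA A (V + V') (W + W') := by
  constructor
  · rw [comp_add, h.1, h'.1, map_add, add_comp]
  · rw [comp_add, h.2, h'.2, map_add, add_comp]

lemma PairA.sub {A V W V' W' : H →L[ℂ] H} (h : PairA A V W) (h' : PairA A V' W') :
    PairA A (V - V') (W - W') := by
  constructor
  · rw [comp_sub, h.1, h'.1, map_sub, sub_comp]
  · rw [comp_sub, h.2, h'.2, map_sub, sub_comp]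

lemma adjoint_smul' (a : ℂ) (V : H →L[ℂ] H) :
    ContinuousLinearMap.adjoint (a • V) = (starRingEnd ℂ a) • ContinuousLinearMap.adjoint V := by
  rw [← star_eq_adjoint, ← star_eq_adjoint, star_smul]
  rfl

lemma PairA.smul {A V W : H →L[ℂ] H} (a : ℂ) (h : PairA A V W) :
    PairA A (a • V) ((starRingEnd ℂ a) • W) := by
  constructor
  · rw [comp_smulₛₗ, h.1, adjoint_smul', smul_comp]
    simp
  · rw [comp_smulₛₗ, h.2, adjoint_smul', smul_comp]
    simp

lemma PairA.comp' {A V₁ W₁ V₂ W₂ : H →L[ℂ] H} (h₁ : PairA A V₁ W₁) (h₂ : PairA A V₂ W₂) :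
    PairA A (V₁.comp V₂) (W₂.comp W₁) := by
  constructor
  · rw [← comp_assoc, h₂.1, comp_assoc, h₁.1, ← comp_assoc, adjoint_comp]
  · rw [← comp_assoc, h₁.2, comp_assoc, h₂.2, ← comp_assoc, adjoint_comp]

lemma innA_pair {A V W : H →L[ℂ] H} (h : PairA A V W) (x y : H) :
    innA A (V x) y = innA A x (W y) := by
  have := congrFun (congrArg DFunLike.coe h.2) x
  simp only [coe_comp', Function.comp_apply] at this
  unfold innA
  rw [this, adjoint_inner_left]

lemma vnormA_zero (A : H →L[ℂ] H) : vnormA A (0 : H) = 0 := by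
  unfold vnormA innA
  simp

lemma vnormA_le_norm (hA : A.IsPositive) (y : H) :
    vnormA A y ≤ Real.sqrt ‖A‖ * ‖y‖ := by
  have h1 : vnormA A y ^ 2 ≤ ‖A‖ * ‖y‖ ^ 2 := by
    rw [vnormA_sq hA]
    calc (innA A y y).re ≤ ‖innA A y y‖ := Complex.re_le_norm _
      _ ≤ ‖A y‖ * ‖y‖ := by
          exact norm_inner_le_norm _ _
      _ ≤ (‖A‖ * ‖y‖) * ‖y‖ := by
          exact mul_le_mul_of_nonneg_right (A.le_opNorm y) (norm_nonneg y)
      _ = ‖A‖ * ‖y‖ ^ 2 := by ring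
  have h2 := Real.sqrt_le_sqrt h1
  rwa [Real.sqrt_sq (vnormA_nonneg A y), Real.sqrt_mul (norm_nonneg A),
    Real.sqrt_sq (norm_nonneg y)] at h2

lemma vnormA_sq_le_step {V W : H →L[ℂ] H} (hA : A.IsPositive) (h : PairA A V W) (x : H) :
    vnormA A (V x) ^ 2 ≤ vnormA A ((W.comp V) x) * vnormA A x := by
  have h1 : innA A (V x) (V x) = innA A x (W (V x)) := innA_pair h x (V x)
  have h2 : (innA A x (W (V x))).re ≤ ‖innA A x (W (V x))‖ := Complex.re_le_norm _
  have h3 := innA_cauchy hA x (W (V x))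
  have h4 : (W.comp V) x = W (V x) := rfl
  rw [vnormA_sq hA, h1, h4]
  calc (innA A x (W (V x))).re ≤ ‖innA A x (W (V x))‖ := h2
    _ ≤ vnormA A x * vnormA A (W (V x)) := h3
    _ = vnormA A (W (V x)) * vnormA A x := mul_comm _ _

lemma PairA.pow {G : H →L[ℂ] H} (hG : PairA A G G) : ∀ n : ℕ, PairA A (G ^ n) (G ^ n) := by
  intro n
  induction n with
  | zero =>
      constructor <;> simp [ContinuousLinearMap.one_def, adjoint_id]
  | succ n ih =>
      have h := ih.comp' hG
      rw [← ContinuousLinearMap.mul_def, ← pow_succ] at h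
      rw [← ContinuousLinearMap.mul_def, ← pow_succ'] at h
      exact h

lemma vnormA_iter {G : H →L[ℂ] H} (hA : A.IsPositive) (hG : PairA A G G) :
    ∀ (n : ℕ) (x : H), vnormA A (G x) ^ (2 ^ n) * vnormA A x ≤
      vnormA A ((G ^ (2 ^ n)) x) * vnormA A x ^ (2 ^ n) := by
  intro n
  induction n with
  | zero => intro x; simp
  | succ n ih =>
      intro x
      set a := 2 ^ n with ha
      have hstep := vnormA_sq_le_step hA (hG.pow a) x
      have hGG : ((G ^ a).comp (G ^ a)) x = (G ^ (a * 2)) x := by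
        rw [← ContinuousLinearMap.mul_def, ← pow_add, mul_two]
      rw [hGG] at hstep
      by_cases hx : vnormA A x = 0
      · rw [hx]
        rw [mul_zero]
        have h2 : (0:ℝ) ^ (2 ^ (n+1)) = 0 := zero_pow (by positivity)
        rw [h2, mul_zero]
      · have hxpos : 0 < vnormA A x := lt_of_le_of_ne (vnormA_nonneg A x) (Ne.symm hx)
        have hIH := ih x
        rw [pow_succ 2 n, ← ha]
        rw [show vnormA A (G x) ^ (a * 2) = (vnormA A (G x) ^ a) ^ 2 from pow_mul _ a 2,
          show vnormA A x ^ (a * 2) = (vnormA A x ^ a) ^ 2 from pow_mul _ a 2]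
        have hnn1 : 0 ≤ vnormA A (G x) ^ a * vnormA A x :=
          mul_nonneg (pow_nonneg (vnormA_nonneg A (G x)) a) (vnormA_nonneg A x)
        have hsq := mul_le_mul hIH hIH hnn1 (mul_nonneg (vnormA_nonneg _ _)
          (pow_nonneg (vnormA_nonneg A x) a))
        nlinarith [hsq, hstep, hxpos, pow_nonneg (vnormA_nonneg A x) a,
          pow_nonneg (vnormA_nonneg A (G x)) a, vnormA_nonneg A ((G ^ a) x),
          vnormA_nonneg A ((G ^ (a * 2)) x), sq_nonneg (vnormA A x ^ a)]

lemma pow2_le_one {q D : ℝ} (hq : 0 ≤ q) (h : ∀ n : ℕ, q ^ (2 ^ n) ≤ D) : q ≤ 1 := by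
  by_contra hlt
  push_neg at hlt
  obtain ⟨m, hm⟩ := exists_nat_gt ((D - 1) / (q - 1))
  have h2 : (m : ℝ) < (2 : ℝ) ^ m := by exact_mod_cast (Nat.lt_two_pow_self (n := m))
  have hb : 1 + ((2 ^ m : ℕ) : ℝ) * (q - 1) ≤ q ^ (2 ^ m : ℕ) := by
    have hber := one_add_mul_le_pow (by linarith : (-2:ℝ) ≤ q - 1) (2 ^ m)
    simpa using hber
  have hq1 : 0 < q - 1 := by linarith
  have hc : D - 1 < ((2 ^ m : ℕ) : ℝ) * (q - 1) := by
    have : (D - 1) / (q - 1) < ((2 ^ m : ℕ) : ℝ) := by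
      push_cast
      calc (D - 1) / (q - 1) < (m : ℝ) := hm
        _ < (2:ℝ) ^ m := h2
    calc D - 1 = ((D - 1) / (q - 1)) * (q - 1) := by field_simp
      _ < ((2 ^ m : ℕ) : ℝ) * (q - 1) := by exact mul_lt_mul_of_pos_right this hq1
  linarith [h m, hb]

lemma pair_self_bound {G : H →L[ℂ] H} (hA : A.IsPositive) (hG : PairA A G G) (x : H) :
    vnormA A (G x) ≤ ‖G‖ * vnormA A x := by
  by_cases hx : vnormA A x = 0
  · have h := vnormA_sq_le_step hA hG x
    rw [hx, mul_zero] at h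
    have h0 : vnormA A (G x) = 0 := by nlinarith [vnormA_nonneg A (G x)]
    rw [h0, hx, mul_zero]
  · have hxpos : 0 < vnormA A x := lt_of_le_of_ne (vnormA_nonneg A x) (Ne.symm hx)
    by_cases hG0 : ‖G‖ = 0
    · have hGz : G = 0 := by rwa [norm_eq_zero] at hG0
      rw [hGz]
      simp [vnormA_zero]
    · have hGpos : 0 < ‖G‖ := lt_of_le_of_ne (norm_nonneg G) (Ne.symm hG0)
      set q : ℝ := vnormA A (G x) / (‖G‖ * vnormA A x) with hq_def
      have hq0 : 0 ≤ q := div_nonneg (vnormA_nonneg A (G x)) (by positivity)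
      have key : ∀ n : ℕ, q ^ (2 ^ n) ≤ Real.sqrt ‖A‖ * ‖x‖ / vnormA A x := by
        intro n
        have hit := vnormA_iter hA hG n x
        have hup : vnormA A ((G ^ (2 ^ n)) x) ≤ Real.sqrt ‖A‖ * (‖G‖ ^ (2 ^ n) * ‖x‖) := by
          calc vnormA A ((G ^ (2 ^ n)) x) ≤ Real.sqrt ‖A‖ * ‖(G ^ (2 ^ n)) x‖ :=
                vnormA_le_norm hA _
            _ ≤ Real.sqrt ‖A‖ * (‖G ^ (2 ^ n)‖ * ‖x‖) := by
                apply mul_le_mul_of_nonneg_left _ (Real.sqrt_nonneg _)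
                exact (G ^ (2 ^ n)).le_opNorm x
            _ ≤ Real.sqrt ‖A‖ * (‖G‖ ^ (2 ^ n) * ‖x‖) := by
                apply mul_le_mul_of_nonneg_left _ (Real.sqrt_nonneg _)
                exact mul_le_mul_of_nonneg_right (norm_pow_le' G (by positivity)) (norm_nonneg x)
        rw [hq_def, div_pow, div_le_div_iff₀ (by positivity) hxpos]
        calc vnormA A (G x) ^ (2 ^ n) * vnormA A x
            ≤ vnormA A ((G ^ (2 ^ n)) x) * vnormA A x ^ (2 ^ n) := hit
          _ ≤ (Real.sqrt ‖A‖ * (‖G‖ ^ (2 ^ n) * ‖x‖)) * vnormA A x ^ (2 ^ n) :=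
              mul_le_mul_of_nonneg_right hup (pow_nonneg (vnormA_nonneg A x) _)
          _ = Real.sqrt ‖A‖ * ‖x‖ * (‖G‖ ^ (2 ^ n) * vnormA A x ^ (2 ^ n)) := by ring
          _ = Real.sqrt ‖A‖ * ‖x‖ * (‖G‖ * vnormA A x) ^ (2 ^ n) := by rw [mul_pow]
      have hq1 : q ≤ 1 := pow2_le_one hq0 key
      rw [hq_def, div_le_one (by positivity)] at hq1
      exact hq1

lemma pair_bound {V W : H →L[ℂ] H} (hA : A.IsPositive) (h : PairA A V W) (x : H) :
    vnormA A (V x) ≤ Real.sqrt ‖W.comp V‖ * vnormA A x := by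
  have hG : PairA A (W.comp V) (W.comp V) := h.symm.comp' h
  have h1 := vnormA_sq_le_step hA h x
  have h2 := pair_self_bound hA hG x
  have h3 : vnormA A (V x) ^ 2 ≤ ‖W.comp V‖ * vnormA A x ^ 2 := by
    nlinarith [vnormA_nonneg A x, vnormA_nonneg A ((W.comp V) x)]
  calc vnormA A (V x) = Real.sqrt (vnormA A (V x) ^ 2) :=
        (Real.sqrt_sq (vnormA_nonneg _ _)).symm
    _ ≤ Real.sqrt (‖W.comp V‖ * vnormA A x ^ 2) := Real.sqrt_le_sqrt h3
    _ = Real.sqrt ‖W.comp V‖ * vnormA A x := by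
        rw [Real.sqrt_mul (norm_nonneg _), Real.sqrt_sq (vnormA_nonneg _ _)]

section opw
variable {V W : H →L[ℂ] H}

lemma bddO (hA : A.IsPositive) (h : PairA A V W) :
    BddAbove {r : ℝ | ∃ x : H, vnormA A x = 1 ∧ r = vnormA A (V x)} := by
  refine ⟨Real.sqrt ‖W.comp V‖, ?_⟩
  rintro r ⟨x, hx, rfl⟩
  have hb := pair_bound hA h x
  rwa [hx, mul_one] at hb

lemma opnormA_le (hex : ∃ x₀ : H, vnormA A x₀ = 1) {M : ℝ}
    (hM : ∀ x : H, vnormA A x = 1 → vnormA A (V x) ≤ M) : opnormA A V ≤ M := by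
  apply csSup_le
  · obtain ⟨x₀, hx₀⟩ := hex
    exact ⟨_, x₀, hx₀, rfl⟩
  · rintro r ⟨x, hx, rfl⟩
    exact hM x hx

lemma le_opnormA (hA : A.IsPositive) (h : PairA A V W) {x : H} (hx : vnormA A x = 1) :
    vnormA A (V x) ≤ opnormA A V :=
  le_csSup (bddO hA h) ⟨x, hx, rfl⟩

lemma opnormA_nonneg (hA : A.IsPositive) (h : PairA A V W)
    (hex : ∃ x₀ : H, vnormA A x₀ = 1) : 0 ≤ opnormA A V := by
  obtain ⟨x₀, hx₀⟩ := hex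
  exact (vnormA_nonneg A (V x₀)).trans (le_opnormA hA h hx₀)

lemma norm_inv_smul (hA : A.IsPositive) {x : H} (hx : vnormA A x ≠ 0) :
    vnormA A ((((vnormA A x)⁻¹ : ℝ) : ℂ) • x) = 1 := by
  rw [vnormA_smul hA]
  rw [Complex.norm_real, Real.norm_eq_abs, _root_.abs_of_nonneg (inv_nonneg.mpr (vnormA_nonneg A x))]
  field_simp

lemma opnormA_mul (hA : A.IsPositive) (h : PairA A V W) (x : H) :
    vnormA A (V x) ≤ opnormA A V * vnormA A x := by
  by_cases hx : vnormA A x = 0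
  · have hb := pair_bound hA h x
    rw [hx, mul_zero] at hb
    rw [hx, mul_zero]
    exact hb
  · have hxpos : 0 < vnormA A x := lt_of_le_of_ne (vnormA_nonneg A x) (Ne.symm hx)
    set c : ℂ := (((vnormA A x)⁻¹ : ℝ) : ℂ) with hc
    have h1 : vnormA A (c • x) = 1 := norm_inv_smul hA hx
    have h2 := le_opnormA hA h h1
    rw [map_smul, vnormA_smul hA, Complex.norm_real, Real.norm_eq_abs,
      _root_.abs_of_nonneg (inv_nonneg.mpr (vnormA_nonneg A x))] at h2
    calc vnormA A (V x) = ((vnormA A x)⁻¹ * vnormA A (V x)) * vnormA A x := by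
          field_simp
      _ ≤ opnormA A V * vnormA A x := mul_le_mul_of_nonneg_right h2 (le_of_lt hxpos)

lemma bddW (hA : A.IsPositive) (h : PairA A V W) :
    BddAbove {r : ℝ | ∃ x : H, vnormA A x = 1 ∧ r = ‖innA A (V x) x‖} := by
  refine ⟨Real.sqrt ‖W.comp V‖, ?_⟩
  rintro r ⟨x, hx, rfl⟩
  have h1 := innA_cauchy hA (V x) x
  have h2 := pair_bound hA h x
  rw [hx, mul_one] at h1 h2
  exact h1.trans h2

lemma wA_le (hex : ∃ x₀ : H, vnormA A x₀ = 1) {M : ℝ}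
    (hM : ∀ x : H, vnormA A x = 1 → ‖innA A (V x) x‖ ≤ M) : wA A V ≤ M := by
  apply csSup_le
  · obtain ⟨x₀, hx₀⟩ := hex
    exact ⟨_, x₀, hx₀, rfl⟩
  · rintro r ⟨x, hx, rfl⟩
    exact hM x hx

lemma le_wA (hA : A.IsPositive) (h : PairA A V W) {x : H} (hx : vnormA A x = 1) :
    ‖innA A (V x) x‖ ≤ wA A V :=
  le_csSup (bddW hA h) ⟨x, hx, rfl⟩

lemma wA_nonneg (hA : A.IsPositive) (h : PairA A V W)
    (hex : ∃ x₀ : H, vnormA A x₀ = 1) : 0 ≤ wA A V := by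
  obtain ⟨x₀, hx₀⟩ := hex
  exact (norm_nonneg _).trans (le_wA hA h hx₀)

lemma wA_mul (hA : A.IsPositive) (h : PairA A V W) (x : H) :
    ‖innA A (V x) x‖ ≤ wA A V * vnormA A x ^ 2 := by
  by_cases hx : vnormA A x = 0
  · have h1 := innA_cauchy hA (V x) x
    rw [hx, mul_zero] at h1
    rw [hx]
    simpa using h1
  · have hxpos : 0 < vnormA A x := lt_of_le_of_ne (vnormA_nonneg A x) (Ne.symm hx)
    set c : ℂ := (((vnormA A x)⁻¹ : ℝ) : ℂ) with hc
    have h1 : vnormA A (c • x) = 1 := norm_inv_smul hA hx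
    have h2 := le_wA hA h h1
    simp only [hc, map_smul, innA_smul_left, innA_smul_right, map_mul, norm_mul, Complex.norm_conj,
      Complex.norm_real, Real.norm_eq_abs] at h2
    rw [_root_.abs_of_nonneg (inv_nonneg.mpr (vnormA_nonneg A x))] at h2
    have hcancel : (vnormA A x)⁻¹ * vnormA A x = 1 := inv_mul_cancel₀ hx
    calc ‖innA A (V x) x‖
        = ((vnormA A x)⁻¹ * vnormA A x) * ((vnormA A x)⁻¹ * vnormA A x)
          * ‖innA A (V x) x‖ := by rw [hcancel]; ring
      _ = ((vnormA A x)⁻¹ * ((vnormA A x)⁻¹ * ‖innA A (V x) x‖))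
          * vnormA A x ^ 2 := by ring
      _ ≤ wA A V * vnormA A x ^ 2 := mul_le_mul_of_nonneg_right h2 (sq_nonneg _)


end opw

lemma opnormA_le_wA {R : H →L[ℂ] H} (hA : A.IsPositive) (hR : PairA A R R)
    (hex : ∃ x₀ : H, vnormA A x₀ = 1) : opnormA A R ≤ wA A R := by
  apply opnormA_le hex
  intro x hx
  by_cases h0 : vnormA A (R x) = 0
  · rw [h0]
    exact wA_nonneg hA hR hex
  · set c : ℂ := (((vnormA A (R x))⁻¹ : ℝ) : ℂ) with hc
    set y : H := c • R x with hy
    have hy1 : vnormA A y = 1 := norm_inv_smul hA h0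
    have hval : innA A (R x) y = ((vnormA A (R x) : ℝ) : ℂ) := by
      rw [hy, innA_smul_right, hc, innA_self_eq_sq hA]
      rw [← Complex.ofReal_mul]
      congr 1
      rw [pow_two]
      field_simp
    have hsymm : innA A (R y) x = innA A (R x) y := by
      have h1 : innA A (R y) x = innA A y (R x) := innA_pair hR y x
      rw [h1, innA_conj hA (R x) y, hval, Complex.conj_ofReal]
    have hpol : innA A (R (x + y)) (x + y) - innA A (R (x - y)) (x - y)
        = 2 * innA A (R x) y + 2 * innA A (R y) x := by
      rw [map_add, map_sub, innA_add_left, innA_add_right, innA_add_right,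
        innA_sub_left, innA_sub_right, innA_sub_right]
      ring
    have hpolval : innA A (R (x + y)) (x + y) - innA A (R (x - y)) (x - y)
        = ((4 * vnormA A (R x) : ℝ) : ℂ) := by
      rw [hpol, hsymm, hval]
      push_cast
      ring
    have hre := congrArg Complex.re hpolval
    simp only [Complex.sub_re, Complex.ofReal_re] at hre
    have h1 := wA_mul hA hR (x + y)
    have h2 := wA_mul hA hR (x - y)
    have hpar := vnormA_parallelogram hA x y
    rw [hx, hy1] at hpar
    have ha1 : (innA A (R (x + y)) (x + y)).re ≤ ‖innA A (R (x + y)) (x + y)‖ :=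
      Complex.re_le_norm _
    have hsum : 4 * vnormA A (R x) ≤ wA A R * vnormA A (x + y) ^ 2
        + wA A R * vnormA A (x - y) ^ 2 := by
      have hb2 : -(innA A (R (x - y)) (x - y)).re ≤ ‖innA A (R (x - y)) (x - y)‖ := by
        have := Complex.abs_re_le_norm (innA A (R (x - y)) (x - y))
        have := abs_le.mp this
        linarith [this.1]
      linarith [ha1.trans h1, hb2.trans h2]
    have hw0 : 0 ≤ wA A R := wA_nonneg hA hR hex
    nlinarith [hsum, hpar]


end AuxLemmas

theorem stmt6 (A T Ts : H →L[ℂ] H) (hA : A.IsPositive) (hTs : IsAAdjoint A T Ts) :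
    wA A T = Real.sqrt ((1 / 4) * opnormA A (Ts.comp T + T.comp Ts)) ↔
      ∀ θ : ℝ,
        opnormA A (ReA (Complex.exp ((θ : ℂ) * Complex.I) • T)
            (Complex.exp (-(θ : ℂ) * Complex.I) • Ts)) ^ 2 =
          (1 / 4) * opnormA A (Ts.comp T + T.comp Ts) ∧
        opnormA A (ImA (Complex.exp ((θ : ℂ) * Complex.I) • T)
            (Complex.exp (-(θ : ℂ) * Complex.I) • Ts)) ^ 2 =
          (1 / 4) * opnormA A (Ts.comp T + T.comp Ts) := by
  by_cases hA0 : A = 0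
  · subst hA0
    have hv : ∀ x : H, vnormA (0 : H →L[ℂ] H) x = 0 := by
      intro x
      unfold vnormA innA
      simp
    have hop : ∀ V : H →L[ℂ] H, opnormA (0 : H →L[ℂ] H) V = 0 := by
      intro V
      unfold opnormA
      rw [show {r : ℝ | ∃ x : H, vnormA (0 : H →L[ℂ] H) x = 1 ∧ r = vnormA 0 (V x)}
          = (∅ : Set ℝ) from ?_, Real.sSup_empty]
      ext r
      simp only [Set.mem_setOf_eq, Set.mem_empty_iff_false, iff_false, not_exists]
      intro x hx
      rw [hv x] at hx
      exact absurd hx.1 (by norm_num)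
    have hw : wA (0 : H →L[ℂ] H) T = 0 := by
      unfold wA
      rw [show {r : ℝ | ∃ x : H, vnormA (0 : H →L[ℂ] H) x = 1
          ∧ r = ‖innA 0 (T x) x‖} = (∅ : Set ℝ) from ?_, Real.sSup_empty]
      ext r
      simp only [Set.mem_setOf_eq, Set.mem_empty_iff_false, iff_false, not_exists]
      intro x hx
      rw [hv x] at hx
      exact absurd hx.1 (by norm_num)
    constructor
    · intro _ θ
      rw [hop, hop, hop]
      norm_num
    · intro _
      rw [hw, hop]
      norm_num
  · have hex : ∃ x₀ : H, vnormA A x₀ = 1 := by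
      have hnz : ∃ x : H, innA A x x ≠ 0 := by
        by_contra hall
        push_neg at hall
        apply hA0
        have hlin : ((A : H →ₗ[ℂ] H)) = 0 :=
          (inner_map_self_eq_zero (A : H →ₗ[ℂ] H)).mp fun x => hall x
        ext x
        have hx := congrArg (fun f : H →ₗ[ℂ] H => f x) hlin
        simpa using hx
      obtain ⟨x, hxne⟩ := hnz
      have hre : 0 < (innA A x x).re := by
        rcases lt_or_eq_of_le (innA_self_re_nonneg hA x) with h | h
        · exact h
        · exact absurd (Complex.ext h.symm (by simpa using innA_self_im hA x)) hxne
      have hvx : vnormA A x ≠ 0 := by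
        unfold vnormA
        exact (Real.sqrt_pos.mpr hre).ne'
      exact ⟨_, norm_inv_smul hA hvx⟩
    have hpT : PairA A T Ts := by
      refine ⟨hTs, ?_⟩
      have h1 := congrArg ContinuousLinearMap.adjoint hTs
      rw [adjoint_comp, adjoint_comp, adjoint_adjoint, hA.1.clm_adjoint_eq] at h1
      exact h1.symm
    have hpD : PairA A (Ts.comp T + T.comp Ts) (Ts.comp T + T.comp Ts) :=
      (hpT.symm.comp' hpT).add (hpT.comp' hpT.symm)
    have hc0 : 0 ≤ (1 / 4 : ℝ) * opnormA A (Ts.comp T + T.comp Ts) := by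
      have := opnormA_nonneg hA hpD hex
      linarith
    have hconj : ∀ θ : ℝ, Complex.exp (-(θ:ℂ) * Complex.I)
        = starRingEnd ℂ (Complex.exp ((θ:ℂ) * Complex.I)) := by
      intro θ
      rw [← Complex.exp_conj]
      congr 1
      simp [map_mul, Complex.conj_ofReal, Complex.conj_I]
    have hab : ∀ θ : ℝ, Complex.exp ((θ:ℂ) * Complex.I)
        * Complex.exp (-(θ:ℂ) * Complex.I) = 1 := by
      intro θ
      rw [← Complex.exp_add, show (θ:ℂ) * Complex.I + -(θ:ℂ) * Complex.I = 0 by ring,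
        Complex.exp_zero]
    have hc2 : (starRingEnd ℂ) ((2:ℂ)⁻¹) = (2:ℂ)⁻¹ := by
      rw [map_inv₀, map_ofNat]
    have hpa : ∀ θ : ℝ, PairA A (Complex.exp ((θ:ℂ) * Complex.I) • T)
        (Complex.exp (-(θ:ℂ) * Complex.I) • Ts) := by
      intro θ
      rw [hconj θ]
      exact hpT.smul _
    have hpR : ∀ θ : ℝ, PairA A (ReA (Complex.exp ((θ:ℂ) * Complex.I) • T)
        (Complex.exp (-(θ:ℂ) * Complex.I) • Ts))
        (ReA (Complex.exp ((θ:ℂ) * Complex.I) • T)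
        (Complex.exp (-(θ:ℂ) * Complex.I) • Ts)) := by
      intro θ
      have h4 := ((hpa θ).add (hpa θ).symm).smul ((2:ℂ)⁻¹)
      have h5 : (starRingEnd ℂ ((2:ℂ)⁻¹)) • (Complex.exp (-(θ:ℂ) * Complex.I) • Ts
          + Complex.exp ((θ:ℂ) * Complex.I) • T)
          = ReA (Complex.exp ((θ:ℂ) * Complex.I) • T)
            (Complex.exp (-(θ:ℂ) * Complex.I) • Ts) := by
        rw [hc2, add_comm]
        rfl
      rw [h5] at h4
      exact h4
    have hTsz : ∀ x : H, innA A (Ts x) x = starRingEnd ℂ (innA A (T x) x) := by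
      intro x
      rw [innA_pair hpT.symm x x, innA_conj hA (T x) x]
    have hinnR : ∀ (θ : ℝ) (x : H),
        innA A ((ReA (Complex.exp ((θ:ℂ) * Complex.I) • T)
          (Complex.exp (-(θ:ℂ) * Complex.I) • Ts)) x) x
        = (((starRingEnd ℂ (Complex.exp ((θ:ℂ) * Complex.I)) * innA A (T x) x).re : ℝ) : ℂ) := by
      intro θ x
      have hRx : (ReA (Complex.exp ((θ:ℂ) * Complex.I) • T)
          (Complex.exp (-(θ:ℂ) * Complex.I) • Ts)) x
          = (2:ℂ)⁻¹ • (Complex.exp ((θ:ℂ) * Complex.I) • T x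
            + Complex.exp (-(θ:ℂ) * Complex.I) • Ts x) := rfl
      rw [hRx, innA_smul_left, innA_add_left, innA_smul_left, innA_smul_left, hTsz x, hc2,
        hconj θ]
      have h6 : starRingEnd ℂ (starRingEnd ℂ (Complex.exp ((θ:ℂ) * Complex.I)))
          * starRingEnd ℂ (innA A (T x) x)
          = starRingEnd ℂ (starRingEnd ℂ (Complex.exp ((θ:ℂ) * Complex.I)) * innA A (T x) x) := by
        rw [map_mul]
      rw [h6, Complex.add_conj]
      push_cast
      ring
    have hwRT : ∀ θ : ℝ, wA A (ReA (Complex.exp ((θ:ℂ) * Complex.I) • T)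
        (Complex.exp (-(θ:ℂ) * Complex.I) • Ts)) ≤ wA A T := by
      intro θ
      apply wA_le hex
      intro x hx
      rw [hinnR θ x, Complex.norm_real, Real.norm_eq_abs]
      calc |(starRingEnd ℂ (Complex.exp ((θ:ℂ) * Complex.I)) * innA A (T x) x).re|
          ≤ ‖starRingEnd ℂ (Complex.exp ((θ:ℂ) * Complex.I)) * innA A (T x) x‖ :=
            Complex.abs_re_le_norm _
        _ = ‖innA A (T x) x‖ := by
            rw [norm_mul, Complex.norm_conj, Complex.norm_exp_ofReal_mul_I, one_mul]
        _ ≤ wA A T := le_wA hA hpT hx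
    have hopRw : ∀ θ : ℝ, opnormA A (ReA (Complex.exp ((θ:ℂ) * Complex.I) • T)
        (Complex.exp (-(θ:ℂ) * Complex.I) • Ts)) ≤ wA A T :=
      fun θ => (opnormA_le_wA hA (hpR θ) hex).trans (hwRT θ)
    have hcos : Complex.cos (((Real.pi/2 : ℝ)):ℂ) = 0 := by
      rw [← Complex.ofReal_cos, Real.cos_pi_div_two, Complex.ofReal_zero]
    have hsin : Complex.sin (((Real.pi/2 : ℝ)):ℂ) = 1 := by
      rw [← Complex.ofReal_sin, Real.sin_pi_div_two, Complex.ofReal_one]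
    have hexpneg : Complex.exp (-((Real.pi/2 : ℝ):ℂ) * Complex.I) = -Complex.I := by
      rw [neg_mul, Complex.exp_neg, Complex.exp_mul_I, hcos, hsin]
      simp [Complex.inv_I]
    have hexppos : Complex.exp (((Real.pi/2 : ℝ):ℂ) * Complex.I) = Complex.I := by
      rw [Complex.exp_mul_I, hcos, hsin]
      ring
    have he1 : ∀ θ : ℝ, Complex.exp ((((θ - Real.pi/2 : ℝ)):ℂ) * Complex.I)
        = -Complex.I * Complex.exp ((θ:ℂ) * Complex.I) := by
      intro θ
      rw [show (((θ - Real.pi/2 : ℝ)):ℂ) * Complex.I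
          = (θ:ℂ) * Complex.I + -((Real.pi/2 : ℝ):ℂ) * Complex.I by push_cast; ring,
        Complex.exp_add, hexpneg]
      ring
    have he2 : ∀ θ : ℝ, Complex.exp (-(((θ - Real.pi/2 : ℝ)):ℂ) * Complex.I)
        = Complex.I * Complex.exp (-(θ:ℂ) * Complex.I) := by
      intro θ
      rw [show (-(((θ - Real.pi/2 : ℝ)):ℂ)) * Complex.I
          = -(θ:ℂ) * Complex.I + ((Real.pi/2 : ℝ):ℂ) * Complex.I by push_cast; ring,
        Complex.exp_add, hexppos]
      ring
    have h2I : (2 * Complex.I)⁻¹ = -(2:ℂ)⁻¹ * Complex.I := by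
      rw [mul_inv, Complex.inv_I]
      ring
    have hIm : ∀ θ : ℝ, ImA (Complex.exp ((θ:ℂ) * Complex.I) • T)
        (Complex.exp (-(θ:ℂ) * Complex.I) • Ts)
        = ReA (Complex.exp ((((θ - Real.pi/2 : ℝ)):ℂ) * Complex.I) • T)
          (Complex.exp (-(((θ - Real.pi/2 : ℝ)):ℂ) * Complex.I) • Ts) := by
      intro θ
      unfold ImA ReA
      rw [he1 θ, he2 θ, smul_sub, smul_add, smul_smul, smul_smul, smul_smul, smul_smul,
        sub_eq_add_neg, ← neg_smul]
      congr 1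
      · rw [show (2 * Complex.I)⁻¹ * Complex.exp ((θ:ℂ) * Complex.I)
            = (2:ℂ)⁻¹ * (-Complex.I * Complex.exp ((θ:ℂ) * Complex.I)) by rw [h2I]; ring]
      · rw [show -((2 * Complex.I)⁻¹ * Complex.exp (-(θ:ℂ) * Complex.I))
            = (2:ℂ)⁻¹ * (Complex.I * Complex.exp (-(θ:ℂ) * Complex.I)) by rw [h2I]; ring]
    have hpI : ∀ θ : ℝ, PairA A (ImA (Complex.exp ((θ:ℂ) * Complex.I) • T)
        (Complex.exp (-(θ:ℂ) * Complex.I) • Ts))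
        (ImA (Complex.exp ((θ:ℂ) * Complex.I) • T)
        (Complex.exp (-(θ:ℂ) * Complex.I) • Ts)) := by
      intro θ
      rw [hIm θ]
      exact hpR _
    have hopIw : ∀ θ : ℝ, opnormA A (ImA (Complex.exp ((θ:ℂ) * Complex.I) • T)
        (Complex.exp (-(θ:ℂ) * Complex.I) • Ts)) ≤ wA A T := by
      intro θ
      rw [hIm θ]
      exact hopRw _
    have hDpt : ∀ (θ : ℝ) (x : H), (Ts.comp T + T.comp Ts) x
        = (2:ℂ) • ((ReA (Complex.exp ((θ:ℂ) * Complex.I) • T)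
            (Complex.exp (-(θ:ℂ) * Complex.I) • Ts))
          ((ReA (Complex.exp ((θ:ℂ) * Complex.I) • T)
            (Complex.exp (-(θ:ℂ) * Complex.I) • Ts)) x))
        + (2:ℂ) • ((ImA (Complex.exp ((θ:ℂ) * Complex.I) • T)
            (Complex.exp (-(θ:ℂ) * Complex.I) • Ts))
          ((ImA (Complex.exp ((θ:ℂ) * Complex.I) • T)
            (Complex.exp (-(θ:ℂ) * Complex.I) • Ts)) x)) := by
      intro θ x
      have hI2 := Complex.I_mul_I
      have habθ := hab θ
      simp only [ImA, ReA, ContinuousLinearMap.add_apply, ContinuousLinearMap.comp_apply,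
        ContinuousLinearMap.smul_apply, ContinuousLinearMap.sub_apply, map_add, map_sub,
        map_smul, smul_add, smul_sub, smul_smul, h2I]
      match_scalars
      · linear_combination (-1 : ℂ) * habθ
          + (Complex.exp ((θ:ℂ) * Complex.I) * Complex.exp (-(θ:ℂ) * Complex.I) / 2) * hI2
      · linear_combination (-1 : ℂ) * habθ
          + (Complex.exp ((θ:ℂ) * Complex.I) * Complex.exp (-(θ:ℂ) * Complex.I) / 2) * hI2
      · linear_combination (-(Complex.exp ((θ:ℂ) * Complex.I))^2 / 2) * hI2
      · linear_combination (-(Complex.exp (-(θ:ℂ) * Complex.I))^2 / 2) * hI2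
    have hlow : ∀ θ : ℝ, opnormA A (Ts.comp T + T.comp Ts)
        ≤ 2 * (opnormA A (ReA (Complex.exp ((θ:ℂ) * Complex.I) • T)
            (Complex.exp (-(θ:ℂ) * Complex.I) • Ts)) ^ 2
          + opnormA A (ImA (Complex.exp ((θ:ℂ) * Complex.I) • T)
            (Complex.exp (-(θ:ℂ) * Complex.I) • Ts)) ^ 2) := by
      intro θ
      set R := ReA (Complex.exp ((θ:ℂ) * Complex.I) • T)
        (Complex.exp (-(θ:ℂ) * Complex.I) • Ts) with hRdef
      set S := ImA (Complex.exp ((θ:ℂ) * Complex.I) • T)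
        (Complex.exp (-(θ:ℂ) * Complex.I) • Ts) with hSdef
      apply opnormA_le hex
      intro x hx
      rw [hDpt θ x]
      have hnR := opnormA_nonneg hA (hpR θ) hex
      have hnS := opnormA_nonneg hA (hpI θ) hex
      have t1 : vnormA A ((2:ℂ) • (R (R x)) + (2:ℂ) • (S (S x)))
          ≤ vnormA A ((2:ℂ) • (R (R x))) + vnormA A ((2:ℂ) • (S (S x))) := vnormA_add_le hA _ _
      have t2 : vnormA A ((2:ℂ) • (R (R x))) = 2 * vnormA A (R (R x)) := by
        rw [vnormA_smul hA]
        norm_num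
      have t3 : vnormA A ((2:ℂ) • (S (S x))) = 2 * vnormA A (S (S x)) := by
        rw [vnormA_smul hA]
        norm_num
      have t4 : vnormA A (R (R x)) ≤ opnormA A R * vnormA A (R x) := opnormA_mul hA (hpR θ) _
      have t5 : vnormA A (R x) ≤ opnormA A R := by
        have h := opnormA_mul hA (hpR θ) x
        rwa [hx, mul_one] at h
      have t6 : vnormA A (S (S x)) ≤ opnormA A S * vnormA A (S x) := opnormA_mul hA (hpI θ) _
      have t7 : vnormA A (S x) ≤ opnormA A S := by
        have h := opnormA_mul hA (hpI θ) x
        rwa [hx, mul_one] at h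
      have t8 : vnormA A (R (R x)) ≤ opnormA A R ^ 2 := by
        nlinarith [vnormA_nonneg A (R x)]
      have t9 : vnormA A (S (S x)) ≤ opnormA A S ^ 2 := by
        nlinarith [vnormA_nonneg A (S x)]
      linarith
    constructor
    · intro hmain θ
      have hw2 : wA A T ^ 2 = 1 / 4 * opnormA A (Ts.comp T + T.comp Ts) := by
        rw [hmain, Real.sq_sqrt hc0]
      have hnR := opnormA_nonneg hA (hpR θ) hex
      have hnS := opnormA_nonneg hA (hpI θ) hex
      have h1 : opnormA A (ReA (Complex.exp ((θ:ℂ) * Complex.I) • T)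
          (Complex.exp (-(θ:ℂ) * Complex.I) • Ts)) ^ 2
          ≤ 1 / 4 * opnormA A (Ts.comp T + T.comp Ts) := by
        rw [← hw2]
        exact pow_le_pow_left₀ hnR (hopRw θ) 2
      have h2 : opnormA A (ImA (Complex.exp ((θ:ℂ) * Complex.I) • T)
          (Complex.exp (-(θ:ℂ) * Complex.I) • Ts)) ^ 2
          ≤ 1 / 4 * opnormA A (Ts.comp T + T.comp Ts) := by
        rw [← hw2]
        exact pow_le_pow_left₀ hnS (hopIw θ) 2
      have h3 := hlow θ
      constructor
      · linarith
      · linarith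
    · intro hcl
      have hnR0 := opnormA_nonneg hA (hpR 0) hex
      have hsq0 : Real.sqrt (1 / 4 * opnormA A (Ts.comp T + T.comp Ts))
          = opnormA A (ReA (Complex.exp (((0:ℝ):ℂ) * Complex.I) • T)
              (Complex.exp (-((0:ℝ):ℂ) * Complex.I) • Ts)) := by
        rw [← (hcl 0).1, Real.sqrt_sq hnR0]
      apply le_antisymm
      · apply wA_le hex
        intro x hx
        by_cases hz0 : innA A (T x) x = 0
        · rw [hz0]
          simpa using Real.sqrt_nonneg (1 / 4 * opnormA A (Ts.comp T + T.comp Ts))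
        · set θ : ℝ := (innA A (T x) x).arg with hθ
          have hz' : ((‖innA A (T x) x‖ : ℂ))
              * Complex.exp ((θ:ℂ) * Complex.I) = innA A (T x) x :=
            Complex.norm_mul_exp_arg_mul_I _
          have hmul : Complex.exp (-(θ:ℂ) * Complex.I)
              * (((‖innA A (T x) x‖ : ℂ)) * Complex.exp ((θ:ℂ) * Complex.I))
              = ((‖innA A (T x) x‖ : ℂ)) := by
            rw [mul_comm ((‖innA A (T x) x‖ : ℂ)) (Complex.exp ((θ:ℂ) * Complex.I)),
              ← mul_assoc, mul_comm (Complex.exp (-(θ:ℂ) * Complex.I))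
                (Complex.exp ((θ:ℂ) * Complex.I)), hab θ, one_mul]
          have harg : Complex.exp (-(θ:ℂ) * Complex.I) * innA A (T x) x
              = ((‖innA A (T x) x‖ : ℂ)) := by
            rw [hz'] at hmul
            exact hmul
          have h9 : ‖innA A ((ReA (Complex.exp ((θ:ℂ) * Complex.I) • T)
              (Complex.exp (-(θ:ℂ) * Complex.I) • Ts)) x) x‖
              = ‖innA A (T x) x‖ := by
            rw [hinnR θ x, ← hconj θ, harg, Complex.ofReal_re, Complex.norm_real, Real.norm_eq_abs,
              _root_.abs_of_nonneg (norm_nonneg _)]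
          have h8 : ‖innA A ((ReA (Complex.exp ((θ:ℂ) * Complex.I) • T)
              (Complex.exp (-(θ:ℂ) * Complex.I) • Ts)) x) x‖
              ≤ opnormA A (ReA (Complex.exp ((θ:ℂ) * Complex.I) • T)
              (Complex.exp (-(θ:ℂ) * Complex.I) • Ts)) := by
            have hcs := innA_cauchy hA ((ReA (Complex.exp ((θ:ℂ) * Complex.I) • T)
              (Complex.exp (-(θ:ℂ) * Complex.I) • Ts)) x) x
            rw [hx, mul_one] at hcs
            exact hcs.trans (le_opnormA hA (hpR θ) hx)
          have h10 : opnormA A (ReA (Complex.exp ((θ:ℂ) * Complex.I) • T)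
              (Complex.exp (-(θ:ℂ) * Complex.I) • Ts))
              = Real.sqrt (1 / 4 * opnormA A (Ts.comp T + T.comp Ts)) := by
            rw [← (hcl θ).1, Real.sqrt_sq (opnormA_nonneg hA (hpR θ) hex)]
          rw [← h9]
          exact h8.trans (le_of_eq h10)
      · calc Real.sqrt (1 / 4 * opnormA A (Ts.comp T + T.comp Ts))
            = opnormA A (ReA (Complex.exp (((0:ℝ):ℂ) * Complex.I) • T)
              (Complex.exp (-((0:ℝ):ℂ) * Complex.I) • Ts)) := hsq0
          _ ≤ wA A (ReA (Complex.exp (((0:ℝ):ℂ) * Complex.I) • T)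
              (Complex.exp (-((0:ℝ):ℂ) * Complex.I) • Ts)) := opnormA_le_wA hA (hpR 0) hex
          _ ≤ wA A T := hwRT 0
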